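/- Let I = {1,…,p} and let B ⊆ 2^I be a collection of nonempty blocks with a base code length cl₀ : B → [0,∞] satisfying ∑_{B ∈ B} 2^{-cl₀(B)} ≤ 1. Define cl(B) = cl₀(B) + 1 for B ∈ B, and for every nonempty F ⊆ I define cl(F) = min { ∑_{j=1}^b cl(B_j) : F = ⋃_{j=1}^b B_j, B_j ∈ B, b ≥ 1 } (with cl(F) = ∞ if F cannot be written as such a union). Then cl is a coding length, i.e. ∑_{F ⊆ I, F ≠ ∅} 2^{-cl(F)} ≤ 1. -/

import Mathlib

open MeasureTheory ProbabilityTheory ENNReal Matrix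

noncomputable section

/-- squared ℓ₂ norm of a vector in ℝⁿ -/
def sqNorm {n : ℕ} (v : Fin n → ℝ) : ℝ := ∑ i, v i ^ 2

/-- ℓ₂ norm of a vector in ℝⁿ -/
def l2norm {n : ℕ} (v : Fin n → ℝ) : ℝ := Real.sqrt (∑ i, v i ^ 2)

/-- `2^{-x}` for `x ∈ [0,∞]`, with `2^{-∞} = 0`. -/
def nmass (x : ℝ≥0∞) : ℝ≥0∞ :=
  if x = ⊤ then 0 else ENNReal.ofReal ((2 : ℝ) ^ (-x.toReal))

/-- A coding length on a finite index set. -/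
def IsCodingLength {ι : Type*} [Fintype ι] [DecidableEq ι]
    (cl : Finset ι → ℝ≥0∞) : Prop :=
  cl ∅ = 0 ∧
    ∑ F ∈ Finset.univ.filter (fun F : Finset ι => F ≠ ∅), nmass (cl F) ≤ 1

/-- coding complexity `c(F) = |F| + cl(F)` -/
def cComplex {ι : Type*} [Fintype ι] [DecidableEq ι]
    (cl : Finset ι → ℝ≥0∞) (F : Finset ι) : ℝ≥0∞ := F.card + cl F

/-- `supp(β) ⊆ F` -/
def suppSubset {ι : Type*} (β : ι → ℝ) (F : Finset ι) : Prop :=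
  ∀ j, β j ≠ 0 → j ∈ F

/-- coding complexity of a vector: `c(β) = min{c(F) : supp(β) ⊆ F}` -/
def cVec {ι : Type*} [Fintype ι] [DecidableEq ι]
    (cl : Finset ι → ℝ≥0∞) (β : ι → ℝ) : ℝ≥0∞ :=
  ⨅ (F : Finset ι) (_ : suppSubset β F), cComplex cl F

/-- sub-additivity of a coding complexity -/
def SubAdditive {ι : Type*} [Fintype ι] [DecidableEq ι]
    (cl : Finset ι → ℝ≥0∞) : Prop :=
  ∀ F F' : Finset ι, cComplex cl (F ∪ F') ≤ cComplex cl F + cComplex cl F'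

/-- Sub-Gaussian noise assumption: independent components with sub-Gaussian mgf bound. -/
def SubGaussianNoise {Ω : Type*} [MeasurableSpace Ω] (μ : Measure Ω) {n : ℕ}
    (y : Ω → Fin n → ℝ) (σ : ℝ) : Prop :=
  (∀ i, Measurable fun ω => y ω i) ∧
  iIndepFun (fun (i : Fin n) => fun ω => y ω i) μ ∧
  ∀ (i : Fin n) (t : ℝ),
    ∫ ω, Real.exp (t * (y ω i - ∫ ω', y ω' i ∂μ)) ∂μ ≤ Real.exp (σ ^ 2 * t ^ 2 / 2)

/-- the expectation vector `E y` -/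
def expVec {Ω : Type*} [MeasurableSpace Ω] (μ : Measure Ω) {n : ℕ}
    (y : Ω → Fin n → ℝ) : Fin n → ℝ := fun i => ∫ ω, y ω i ∂μ

/-- ρ₋(F) -/
def rhoMinusF {n p : ℕ} (X : Matrix (Fin n) (Fin p) ℝ) (F : Finset (Fin p)) : ℝ :=
  sInf {r | ∃ β : Fin p → ℝ, β ≠ 0 ∧ suppSubset β F ∧
    r = sqNorm (X.mulVec β) / (n * sqNorm β)}

/-- ρ₊(F) -/
def rhoPlusF {n p : ℕ} (X : Matrix (Fin n) (Fin p) ℝ) (F : Finset (Fin p)) : ℝ :=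
  sSup {r | ∃ β : Fin p → ℝ, β ≠ 0 ∧ suppSubset β F ∧
    r = sqNorm (X.mulVec β) / (n * sqNorm β)}

/-- ρ₋(s) = inf{ρ₋(F) : c(F) ≤ s} -/
def rhoMinus {n p : ℕ} (X : Matrix (Fin n) (Fin p) ℝ)
    (cl : Finset (Fin p) → ℝ≥0∞) (s : ℝ≥0∞) : ℝ :=
  sInf {r | ∃ F : Finset (Fin p), cComplex cl F ≤ s ∧ r = rhoMinusF X F}

/-- Projection matrix onto the span of the columns of `X` indexed by `S`:
`P_S = X_S (X_Sᵀ X_S)⁻¹ X_Sᵀ`. -/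
def projMat {n p : ℕ} (X : Matrix (Fin n) (Fin p) ℝ) (S : Finset (Fin p)) :
    Matrix (Fin n) (Fin n) ℝ :=
  let XS : Matrix (Fin n) {j // j ∈ S} ℝ := Matrix.of fun i j => X i j.1
  XS * (XSᵀ * XS)⁻¹ * XSᵀ

/-- the least squares solution restricted to support `F` -/
def leastSquares {n p : ℕ} (X : Matrix (Fin n) (Fin p) ℝ) (y : Fin n → ℝ)
    (F : Finset (Fin p)) (β : Fin p → ℝ) : Prop :=
  suppSubset β F ∧
    ∀ β' : Fin p → ℝ, suppSubset β' F →
      sqNorm (X.mulVec β - y) ≤ sqNorm (X.mulVec β' - y)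

/-- the greedy gain criterion φ(B) -/
def phi {n p : ℕ} (X : Matrix (Fin n) (Fin p) ℝ) (y : Fin n → ℝ)
    (cl : Finset (Fin p) → ℝ≥0∞) (Fcur : Finset (Fin p)) (β : Fin p → ℝ)
    (B : Finset (Fin p)) : ℝ :=
  sqNorm ((projMat X (B \ Fcur)).mulVec (X.mulVec β - y)) /
    (cComplex cl (B ∪ Fcur) - cComplex cl Fcur).toReal

/-- a valid selection of block `B` in one step of the structured greedy algorithm -/
def GreedyStep {n p : ℕ} (X : Matrix (Fin n) (Fin p) ℝ) (y : Fin n → ℝ)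
    (cl : Finset (Fin p) → ℝ≥0∞) (Blocks : Finset (Finset (Fin p))) (γ : ℝ)
    (Fprev : Finset (Fin p)) (βprev : Fin p → ℝ) (B : Finset (Fin p)) : Prop :=
  B ∈ Blocks ∧
  ((∃ B' ∈ Blocks, ¬ B' ⊆ Fprev ∧ cComplex cl (B' ∪ Fprev) ≤ cComplex cl Fprev) →
      ¬ B ⊆ Fprev ∧ cComplex cl (B ∪ Fprev) ≤ cComplex cl Fprev) ∧
  ((∀ B' ∈ Blocks, ¬ B' ⊆ Fprev → cComplex cl Fprev < cComplex cl (B' ∪ Fprev)) →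
      ∀ B' ∈ Blocks, γ * phi X y cl Fprev βprev B' ≤ phi X y cl Fprev βprev B)

/-- a run of the structured greedy algorithm with stopping time `k`. -/
def IsGreedyRun {n p : ℕ} (X : Matrix (Fin n) (Fin p) ℝ) (y : Fin n → ℝ)
    (cl : Finset (Fin p) → ℝ≥0∞) (Blocks : Finset (Finset (Fin p))) (γ s : ℝ)
    (F : ℕ → Finset (Fin p)) (β : ℕ → Fin p → ℝ) (k : ℕ) : Prop :=
  F 0 = ∅ ∧ β 0 = 0 ∧ 0 < k ∧
  (∀ m < k, ∃ B, GreedyStep X y cl Blocks γ (F m) (β m) B ∧ F (m + 1) = B ∪ F m) ∧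
  (∀ m, 0 < m → m ≤ k → leastSquares X y (F m) (β m)) ∧
  ENNReal.ofReal s < cVec cl (β k) ∧
  (∀ m, 0 < m → m < k → cVec cl (β m) ≤ ENNReal.ofReal s)

/-- block coding complexity `c(β, B)` -/
def blockComplexity {ι : Type*} [Fintype ι] [DecidableEq ι] (cl : Finset ι → ℝ≥0∞)
    (Blocks : Finset (Finset ι)) (β : ι → ℝ) : ℝ≥0∞ :=
  ⨅ (b : ℕ) (Bs : Fin b → Finset ι) (_ : ∀ j, Bs j ∈ Blocks)
    (_ : ∀ i, β i ≠ 0 → ∃ j, i ∈ Bs j), ∑ j, cComplex cl (Bs j)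

/-- `ρ₀(B) = max_{B ∈ Blocks} ρ₊(B)` -/
def rho0 {n p : ℕ} (X : Matrix (Fin n) (Fin p) ℝ)
    (Blocks : Finset (Finset (Fin p))) : ℝ :=
  sSup {r | ∃ B ∈ Blocks, r = rhoPlusF X B}

/-- `-log₂ x` valued in `[0,∞]`, with value `∞` for `x ≤ 0` -/
def negLog2 (x : ℝ) : ℝ≥0∞ :=
  if x ≤ 0 then ⊤ else ENNReal.ofReal (-(Real.logb 2 x))

end
lemma nmass_top : nmass ⊤ = 0 := by simp [nmass]

lemma nmass_zero : nmass 0 = 1 := by simp [nmass]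

lemma nmass_add (a b : ℝ≥0∞) : nmass (a + b) = nmass a * nmass b := by
  unfold nmass
  rcases eq_or_ne a ⊤ with ha | ha
  · simp [ha]
  rcases eq_or_ne b ⊤ with hb | hb
  · simp [hb, ha]
  rw [if_neg (by simp [ha, hb]), if_neg ha, if_neg hb,
    ENNReal.toReal_add ha hb, neg_add, Real.rpow_add (by norm_num),
    ENNReal.ofReal_mul (by positivity)]

lemma nmass_anti {a b : ℝ≥0∞} (h : a ≤ b) : nmass b ≤ nmass a := by
  unfold nmass
  rcases eq_or_ne b ⊤ with hb | hb
  · simp [hb]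
  rw [if_neg hb, if_neg (by rintro rfl; exact hb (top_le_iff.mp h))]
  apply ENNReal.ofReal_le_ofReal
  apply Real.rpow_le_rpow_of_exponent_le (by norm_num)
  exact neg_le_neg (ENNReal.toReal_mono hb h)

lemma nmass_one : nmass 1 = 2⁻¹ := by
  unfold nmass
  rw [if_neg one_ne_top]
  norm_num [Real.rpow_neg_one]
  rw [one_div, ENNReal.ofReal_inv_of_pos (by norm_num)]
  norm_num

lemma nmass_sum {ι : Type*} (s : Finset ι) (f : ι → ℝ≥0∞) :
    nmass (∑ j ∈ s, f j) = ∏ j ∈ s, nmass (f j) := by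
  induction s using Finset.cons_induction with
  | empty => simpa using nmass_zero
  | cons a s ha ih => rw [Finset.sum_cons, Finset.prod_cons, nmass_add, ih]

lemma attain {p : ℕ} (ℬ : Finset (Finset (Fin p))) (cl0 cl : Finset (Fin p) → ℝ≥0∞)
    (F : Finset (Fin p))
    (hcl : cl F = ⨅ (b : ℕ) (_ : 1 ≤ b) (Bs : Fin b → Finset (Fin p))
        (_ : ∀ j, Bs j ∈ ℬ) (_ : F = Finset.univ.biUnion Bs), ∑ j, (cl0 (Bs j) + 1))
    (htop : cl F ≠ ⊤) :
    ∃ (b : ℕ) (Bs : Fin b → Finset (Fin p)), 1 ≤ b ∧ (∀ j, Bs j ∈ ℬ) ∧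
      F = Finset.univ.biUnion Bs ∧ ∑ j, (cl0 (Bs j) + 1) ≤ cl F := by
  classical
  set val : (Σ b : ℕ, (Fin b → Finset (Fin p))) → ℝ≥0∞ := fun t =>
    if (1 ≤ t.1 ∧ (∀ j, t.2 j ∈ ℬ) ∧ F = Finset.univ.biUnion t.2)
      then ∑ j, (cl0 (t.2 j) + 1) else ⊤ with hvaldef
  have hval : cl F = ⨅ t, val t := by
    rw [hcl]
    apply le_antisymm
    · refine le_iInf fun t => ?_
      by_cases h : 1 ≤ t.1 ∧ (∀ j, t.2 j ∈ ℬ) ∧ F = Finset.univ.biUnion t.2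
      · refine le_trans ?_ (le_of_eq (if_pos h).symm)
        exact iInf_le_of_le t.1 (iInf_le_of_le h.1 (iInf_le_of_le t.2
          (iInf_le_of_le h.2.1 (iInf_le _ h.2.2))))
      · exact le_trans le_top (le_of_eq (if_neg h).symm)
    · refine le_iInf fun b => le_iInf fun hb => le_iInf fun Bs => le_iInf fun hBs =>
        le_iInf fun hFeq => ?_
      exact iInf_le_of_le ⟨b, Bs⟩ (le_of_eq (if_pos ⟨hb, hBs, hFeq⟩))
  have hex : ∃ t, val t ≠ ⊤ := by
    by_contra h
    push_neg at h
    exact htop (hval.trans (iInf_eq_top.mpr h))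
  obtain ⟨t₀, ht₀⟩ := hex
  have hcard : ∀ t, val t ≤ val t₀ → (t.1 : ℝ≥0∞) ≤ val t₀ := by
    intro t ht
    refine le_trans ?_ ht
    by_cases h : 1 ≤ t.1 ∧ (∀ j, t.2 j ∈ ℬ) ∧ F = Finset.univ.biUnion t.2
    · rw [hvaldef]; simp only [if_pos h]
      calc (t.1 : ℝ≥0∞) = ∑ _j : Fin t.1, 1 := by simp
        _ ≤ ∑ j, (cl0 (t.2 j) + 1) := Finset.sum_le_sum fun j _ => le_add_self
    · exfalso
      apply ht₀
      have : val t = ⊤ := by rw [hvaldef]; exact if_neg h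
      exact top_le_iff.mp (this ▸ ht)
  set N : ℕ := Nat.floor (val t₀).toReal with hN
  have hmemC : ∀ t, val t ≤ val t₀ →
      t ∈ (Finset.range (N + 1)).sigma fun b => (Finset.univ : Finset (Fin b → Finset (Fin p))) := by
    intro t ht
    refine Finset.mem_sigma.mpr ⟨Finset.mem_range.mpr (Nat.lt_succ_of_le ?_), Finset.mem_univ _⟩
    refine Nat.le_floor ?_
    have := ENNReal.toReal_mono ht₀ (hcard t ht)
    simpa using this
  set C' := (((Finset.range (N + 1)).sigma fun b =>
      (Finset.univ : Finset (Fin b → Finset (Fin p)))).filter fun t => val t ≤ val t₀) with hC'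
  have ht₀C' : t₀ ∈ C' := Finset.mem_filter.mpr ⟨hmemC t₀ le_rfl, le_rfl⟩
  obtain ⟨tm, htmC', htmmin⟩ := Finset.exists_min_image C' val ⟨t₀, ht₀C'⟩
  have hmin : ∀ t, val tm ≤ val t := by
    intro t
    by_cases ht : val t ≤ val t₀
    · exact htmmin t (Finset.mem_filter.mpr ⟨hmemC t ht, ht⟩)
    · exact le_trans (htmmin t₀ ht₀C') (le_of_not_ge ht)
  have htm_le : val tm ≤ cl F := hval ▸ le_iInf hmin
  have htm_ne : val tm ≠ ⊤ := fun h => htop (top_le_iff.mp (h ▸ htm_le))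
  have hcond : 1 ≤ tm.1 ∧ (∀ j, tm.2 j ∈ ℬ) ∧ F = Finset.univ.biUnion tm.2 := by
    by_contra h
    exact htm_ne (by rw [hvaldef]; exact if_neg h)
  refine ⟨tm.1, tm.2, hcond.1, hcond.2.1, hcond.2.2, ?_⟩
  rw [hvaldef] at htm_le
  simp only [if_pos hcond] at htm_le
  exact htm_le

set_option maxHeartbeats 1000000 in
/-- block coding yields a coding length:
Given a finite collection `ℬ` of nonempty blocks in `{1,…,p}` with base code lengths
`cl₀` satisfying `∑_{B ∈ ℬ} 2^{-cl₀(B)} ≤ 1`, the induced block coding length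
`cl(F) = min{∑_j (cl₀(B_j)+1) : F = ⋃_j B_j, B_j ∈ ℬ}` (and `∞` when no such
representation exists, `cl(∅) = 0`) satisfies `∑_{F ≠ ∅} 2^{-cl(F)} ≤ 1`,
i.e. `cl` is a coding length. -/
theorem block_coding_is_coding_length {p : ℕ}
    (ℬ : Finset (Finset (Fin p))) (hne : ∀ B ∈ ℬ, B ≠ ∅)
    (cl0 : Finset (Fin p) → ℝ≥0∞)
    (hsum : ∑ B ∈ ℬ, nmass (cl0 B) ≤ 1)
    (cl : Finset (Fin p) → ℝ≥0∞)
    (hcl_empty : cl ∅ = 0)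
    (hcl : ∀ F : Finset (Fin p), F ≠ ∅ →
      cl F = ⨅ (b : ℕ) (_ : 1 ≤ b) (Bs : Fin b → Finset (Fin p))
        (_ : ∀ j, Bs j ∈ ℬ) (_ : F = Finset.univ.biUnion Bs),
          ∑ j, (cl0 (Bs j) + 1)) :
    IsCodingLength cl := by
  classical
  refine ⟨hcl_empty, ?_⟩
  set w : Finset (Fin p) → ℝ≥0∞ :=
    fun B => if B ∈ ℬ then 2⁻¹ * nmass (cl0 B) else 0 with hw
  set g : (Σ b : ℕ, (Fin b → Finset (Fin p))) → ℝ≥0∞ :=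
    fun t => if 1 ≤ t.1 then ∏ j, w (t.2 j) else 0 with hg
  set s := Finset.univ.filter (fun F : Finset (Fin p) => F ≠ ∅) with hs
  set s₁ := s.filter (fun F => cl F ≠ ⊤) with hs₁
  have hsplit : ∑ F ∈ s₁, nmass (cl F) = ∑ F ∈ s, nmass (cl F) := by
    refine Finset.sum_filter_of_ne fun F _ hne0 => ?_
    intro h
    exact hne0 (by rw [h, nmass_top])
  have h1 : ∑ F ∈ s₁, nmass (cl F) ≤ ∑' t, g t := by
    have hrep : ∀ F : {x // x ∈ s₁}, ∃ t : Σ b : ℕ, (Fin b → Finset (Fin p)),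
        Finset.univ.biUnion t.2 = (F : Finset (Fin p)) ∧ nmass (cl F) ≤ g t := by
      rintro ⟨F, hF⟩
      rw [hs₁, Finset.mem_filter, hs, Finset.mem_filter] at hF
      obtain ⟨⟨-, hFne⟩, hFt⟩ := hF
      obtain ⟨b, Bs, hb, hBs, hFeq, hle⟩ := attain ℬ cl0 cl F (hcl F hFne) hFt
      refine ⟨⟨b, Bs⟩, hFeq.symm, ?_⟩
      have hgt : g ⟨b, Bs⟩ = ∏ j, (2⁻¹ * nmass (cl0 (Bs j))) := by
        rw [hg]
        simp only [if_pos hb]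
        exact Finset.prod_congr rfl fun j _ => by rw [hw]; simp [hBs j]
      rw [hgt]
      calc nmass (cl F) ≤ nmass (∑ j, (cl0 (Bs j) + 1)) := nmass_anti hle
        _ = ∏ j, nmass (cl0 (Bs j) + 1) := nmass_sum _ _
        _ = ∏ j, (2⁻¹ * nmass (cl0 (Bs j))) :=
            Finset.prod_congr rfl fun j _ => by rw [nmass_add, nmass_one, mul_comm]
    choose i hi hile using hrep
    have hinj : Function.Injective i := by
      intro a b hab
      exact Subtype.ext (by rw [← hi a, ← hi b, hab])
    calc ∑ F ∈ s₁, nmass (cl F)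
        = ∑' F : {x // x ∈ s₁}, nmass (cl (F : Finset (Fin p))) :=
          (Finset.tsum_subtype s₁ fun F => nmass (cl F)).symm
      _ ≤ ∑' t, g t :=
          ENNReal.summable.tsum_le_tsum_of_inj i hinj (fun _ _ => zero_le) hile
            ENNReal.summable
  have h2 : ∑' t, g t ≤ 1 := by
    have hW : ∑ B : Finset (Fin p), w B ≤ 2⁻¹ := by
      rw [hw]
      calc ∑ B : Finset (Fin p), (if B ∈ ℬ then 2⁻¹ * nmass (cl0 B) else 0)
          = ∑ B ∈ ℬ, 2⁻¹ * nmass (cl0 B) := by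
            rw [Finset.sum_ite_mem, Finset.univ_inter]
        _ = 2⁻¹ * ∑ B ∈ ℬ, nmass (cl0 B) := (Finset.mul_sum _ _ _).symm
        _ ≤ 2⁻¹ * 1 := mul_le_mul_right hsum _
        _ = 2⁻¹ := mul_one _
    calc ∑' t, g t
        = ∑' (b : ℕ) (Bs : Fin b → Finset (Fin p)), g ⟨b, Bs⟩ := ENNReal.tsum_sigma' _
      _ = ∑' b : ℕ, (if 1 ≤ b then (∑ B : Finset (Fin p), w B) ^ b else 0) := by
          refine tsum_congr fun b => ?_
          rw [tsum_fintype]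
          by_cases hb : 1 ≤ b
          · rw [if_pos hb]
            have e1 : ((∑ B : Finset (Fin p), w B) ^ b : ℝ≥0∞)
                = ∏ _j : Fin b, ∑ B : Finset (Fin p), w B := by
              rw [Finset.prod_const, Finset.card_univ, Fintype.card_fin]
            rw [e1, Finset.prod_univ_sum, Fintype.piFinset_univ]
            exact Finset.sum_congr rfl fun Bs _ => by simp [hg, hb]
          · simp [hg, hb]
      _ ≤ ∑' b : ℕ, (if 1 ≤ b then (2⁻¹ : ℝ≥0∞) ^ b else 0) := by
          refine ENNReal.tsum_le_tsum fun b => ?_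
          split
          · exact pow_le_pow_left' hW b
          · exact le_rfl
      _ = ∑' b : ℕ, (2⁻¹ : ℝ≥0∞) ^ (b + 1) := by
          rw [tsum_eq_zero_add' ENNReal.summable]
          simp
      _ = 2⁻¹ * ∑' b : ℕ, (2⁻¹ : ℝ≥0∞) ^ b := by
          simp_rw [pow_succ, mul_comm]
          rw [ENNReal.tsum_mul_left]
      _ = 2⁻¹ * 2 := by
          rw [ENNReal.tsum_geometric, ENNReal.one_sub_inv_two, inv_inv]
      _ = 1 := by
          rw [ENNReal.inv_mul_cancel (by norm_num) (by norm_num)]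
  calc ∑ F ∈ s, nmass (cl F) = ∑ F ∈ s₁, nmass (cl F) := hsplit.symm
    _ ≤ 1 := h1.trans h2
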